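/- arXiv:2402.19130 — 5 statements merged into one kernel-verified Lean document; each statement's English description precedes it below -/
import Mathlib

section
/- Let u, v ∈ ℂ \ {0} with u ≠ v, and define the 3×3 complex matrices A₀ = I + u·E₁₂, B₀ = I + v·E₁₂, and T with rows (−2u, 0, 0), (1, 0, 0), (1/(2(v−u)), 1, 0). Then α(A₀TA₀) = δ(A₀TA₀) = 3, α(B₀TB₀) = δ(B₀TB₀) = 2, and T satisfies T²(T + 2uI) = 0 with T² ≠ 0 and T(T + 2uI) ≠ 0 (so T is algebraic of degree three). -/
open Matrix

/-- The ascent of a square matrix (viewed as a linear map): the least `n : ℕ` with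
`ker (A ^ n) = ker (A ^ (n+1))`, and `⊤` (i.e. `∞`) if no such `n` exists. -/
noncomputable def ascentM {n : ℕ} (A : Matrix (Fin n) (Fin n) ℂ) : ℕ∞ :=
  sInf (Nat.cast ''
    {m : ℕ | LinearMap.ker (A ^ m).mulVecLin = LinearMap.ker (A ^ (m + 1)).mulVecLin})

/-- The descent of a square matrix (viewed as a linear map): the least `n : ℕ` with
`range (A ^ n) = range (A ^ (n+1))`, and `⊤` (i.e. `∞`) if no such `n` exists. -/
noncomputable def descentM {n : ℕ} (A : Matrix (Fin n) (Fin n) ℂ) : ℕ∞ :=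
  sInf (Nat.cast ''
    {m : ℕ | LinearMap.range (A ^ m).mulVecLin = LinearMap.range (A ^ (m + 1)).mulVecLin})

lemma ker_iff_range_aux {n : ℕ} (A : Matrix (Fin n) (Fin n) ℂ) (m : ℕ) :
    LinearMap.ker (A ^ m).mulVecLin = LinearMap.ker (A ^ (m + 1)).mulVecLin ↔
    LinearMap.range (A ^ m).mulVecLin = LinearMap.range (A ^ (m + 1)).mulVecLin := by
  have hker : LinearMap.ker (A ^ m).mulVecLin ≤ LinearMap.ker (A ^ (m + 1)).mulVecLin := by
    intro x hx
    rw [LinearMap.mem_ker] at hx ⊢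
    rw [pow_succ', Matrix.mulVecLin_mul, LinearMap.comp_apply, hx, map_zero]
  have hrange : LinearMap.range (A ^ (m + 1)).mulVecLin ≤ LinearMap.range (A ^ m).mulVecLin := by
    rintro _ ⟨x, rfl⟩
    rw [pow_succ, Matrix.mulVecLin_mul]
    exact ⟨_, rfl⟩
  have h1 := LinearMap.finrank_range_add_finrank_ker (A ^ m).mulVecLin
  have h2 := LinearMap.finrank_range_add_finrank_ker (A ^ (m + 1)).mulVecLin
  constructor
  · intro h
    have hk : Module.finrank ℂ (LinearMap.ker (A ^ m).mulVecLin)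
        = Module.finrank ℂ (LinearMap.ker (A ^ (m + 1)).mulVecLin) := by rw [h]
    exact (Submodule.eq_of_le_of_finrank_le hrange (by omega)).symm
  · intro h
    have hk : Module.finrank ℂ (LinearMap.range (A ^ m).mulVecLin)
        = Module.finrank ℂ (LinearMap.range (A ^ (m + 1)).mulVecLin) := by rw [h]
    exact Submodule.eq_of_le_of_finrank_le hker (by omega)

lemma descentM_eq_ascentM {n : ℕ} (A : Matrix (Fin n) (Fin n) ℂ) :
    descentM A = ascentM A := by
  unfold descentM ascentM
  have hset : {m : ℕ | LinearMap.range (A ^ m).mulVecLin = LinearMap.range (A ^ (m + 1)).mulVecLin}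
      = {m : ℕ | LinearMap.ker (A ^ m).mulVecLin = LinearMap.ker (A ^ (m + 1)).mulVecLin} := by
    ext m
    exact (ker_iff_range_aux A m).symm
  rw [hset]

lemma ascentM_eq {n : ℕ} (A : Matrix (Fin n) (Fin n) ℂ) (k : ℕ)
    (hk : LinearMap.ker (A ^ k).mulVecLin = LinearMap.ker (A ^ (k + 1)).mulVecLin)
    (hlt : ∀ m < k, LinearMap.ker (A ^ m).mulVecLin ≠ LinearMap.ker (A ^ (m + 1)).mulVecLin) :
    ascentM A = (k : ℕ∞) := by
  apply le_antisymm
  · exact sInf_le ⟨k, hk, rfl⟩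
  · apply le_sInf
    rintro _ ⟨m, hm, rfl⟩
    by_contra h
    push_neg at h
    exact hlt m (by exact_mod_cast h) hm

set_option maxHeartbeats 2000000 in
theorem ascent_descent_A0_B0_T (u v : ℂ) (hu : u ≠ 0) (hv : v ≠ 0) (huv : u ≠ v) :
    let A0 : Matrix (Fin 3) (Fin 3) ℂ := 1 + u • Matrix.single 0 1 1
    let B0 : Matrix (Fin 3) (Fin 3) ℂ := 1 + v • Matrix.single 0 1 1
    let T : Matrix (Fin 3) (Fin 3) ℂ :=
      !![-(2 * u), 0, 0; 1, 0, 0; 1 / (2 * (v - u)), 1, 0]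
    ascentM (A0 * T * A0) = 3 ∧ descentM (A0 * T * A0) = 3 ∧
    ascentM (B0 * T * B0) = 2 ∧ descentM (B0 * T * B0) = 2 ∧
    T ^ 2 * (T + (2 * u) • 1) = 0 ∧ T ^ 2 ≠ 0 ∧ T * (T + (2 * u) • 1) ≠ 0 := by
  intro A0 B0 T
  have hvu : v - u ≠ 0 := sub_ne_zero.mpr (Ne.symm huv)
  have hM : A0 * T * A0 = !![-u, -(u * u), 0; 1, u, 0;
      1 / (2 * (v - u)), (1 / (2 * (v - u))) * u + 1, 0] := by
    ext i j
    fin_cases i <;> fin_cases j <;>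
      simp [A0, T, Matrix.mul_apply, Fin.sum_univ_three, Matrix.single,
        Matrix.one_apply] <;>
      first
        | rfl
        | ring1
        | (field_simp [hvu]; ring1)
        | (left; field_simp [hvu]; ring1)
        | (right; field_simp [hvu]; ring1)
        | (simp [Matrix.vecHead, Matrix.vecTail])
        | (left; simp [Matrix.vecHead, Matrix.vecTail])
        | (right; simp [Matrix.vecHead, Matrix.vecTail])
  have hN : B0 * T * B0 = !![v - 2 * u, v * (v - 2 * u), 0; 1, v, 0;
      1 / (2 * (v - u)), (1 / (2 * (v - u))) * v + 1, 0] := by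
    ext i j
    fin_cases i <;> fin_cases j <;>
      simp [B0, T, Matrix.mul_apply, Fin.sum_univ_three, Matrix.single,
        Matrix.one_apply] <;>
      first
        | rfl
        | ring1
        | (field_simp [hvu]; ring1)
        | (left; field_simp [hvu]; ring1)
        | (right; field_simp [hvu]; ring1)
        | (simp [Matrix.vecHead, Matrix.vecTail])
        | (left; simp [Matrix.vecHead, Matrix.vecTail])
        | (right; simp [Matrix.vecHead, Matrix.vecTail])
  set M : Matrix (Fin 3) (Fin 3) ℂ := !![-u, -(u * u), 0; 1, u, 0;
      1 / (2 * (v - u)), (1 / (2 * (v - u))) * u + 1, 0] with hMdef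
  set N : Matrix (Fin 3) (Fin 3) ℂ := !![v - 2 * u, v * (v - 2 * u), 0; 1, v, 0;
      1 / (2 * (v - u)), (1 / (2 * (v - u))) * v + 1, 0] with hNdef
  have hM2 : M ^ 2 = !![0, 0, 0; 0, 0, 0; 1, u, 0] := by
    rw [pow_two, hMdef]
    ext i j
    fin_cases i <;> fin_cases j <;>
      simp [Matrix.mul_apply, Fin.sum_univ_three] <;>
      first
        | rfl
        | ring1
        | (field_simp [hvu]; ring1)
        | (left; field_simp [hvu]; ring1)
        | (right; field_simp [hvu]; ring1)
        | (simp [Matrix.vecHead, Matrix.vecTail])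
        | (left; simp [Matrix.vecHead, Matrix.vecTail])
        | (right; simp [Matrix.vecHead, Matrix.vecTail])
  have hM3 : M ^ 3 = 0 := by
    have e : M ^ 3 = M ^ 2 * M := pow_succ M 2
    rw [e, hM2, hMdef]
    ext i j
    fin_cases i <;> fin_cases j <;>
      simp [Matrix.mul_apply, Fin.sum_univ_three] <;>
      first
        | rfl
        | ring1
        | (field_simp [hvu]; ring1)
  have hM4 : M ^ 4 = 0 := by
    have e : M ^ 4 = M ^ 3 * M := pow_succ M 3
    rw [e, hM3, zero_mul]
  have hN2 : N ^ 2 = !![2 * (v - u) * (v - 2 * u), 2 * v * (v - u) * (v - 2 * u), 0;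
      2 * (v - u), 2 * v * (v - u), 0; 2, 2 * v, 0] := by
    rw [pow_two, hNdef]
    ext i j
    fin_cases i <;> fin_cases j <;>
      simp [Matrix.mul_apply, Fin.sum_univ_three] <;>
      first
        | rfl
        | ring1
        | (field_simp [hvu]; ring1)
        | (left; field_simp [hvu]; ring1)
        | (right; field_simp [hvu]; ring1)
        | (simp [Matrix.vecHead, Matrix.vecTail])
        | (left; simp [Matrix.vecHead, Matrix.vecTail])
        | (right; simp [Matrix.vecHead, Matrix.vecTail])
  have hN3 : N ^ 3 = (2 * (v - u)) • (N ^ 2) := by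
    have e : N ^ 3 = N ^ 2 * N := pow_succ N 2
    rw [e, hN2, hNdef]
    ext i j
    fin_cases i <;> fin_cases j <;>
      simp [Matrix.mul_apply, Fin.sum_univ_three, Matrix.smul_apply] <;>
      first
        | rfl
        | ring1
        | (field_simp [hvu]; ring1)
        | (left; field_simp [hvu]; ring1)
        | (right; field_simp [hvu]; ring1)
        | (simp [Matrix.vecHead, Matrix.vecTail])
        | (left; simp [Matrix.vecHead, Matrix.vecTail])
        | (right; simp [Matrix.vecHead, Matrix.vecTail])
  have haM : ascentM M = 3 := by
    have key := ascentM_eq M 3 ?_ ?_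
    · exact_mod_cast key
    · rw [show (3 : ℕ) + 1 = 4 from rfl, hM3, hM4]
    · intro m hm
      interval_cases m
      · intro h
        have he : (M ^ 1).mulVecLin ![0, 0, 1] = 0 := by
          rw [pow_one, Matrix.mulVecLin_apply, hMdef]
          funext i
          fin_cases i <;> simp [Matrix.mulVec, dotProduct, Fin.sum_univ_three]
        have hmem : (![0, 0, 1] : Fin 3 → ℂ) ∈ LinearMap.ker (M ^ 0).mulVecLin := by
          rw [h]; exact he
        rw [pow_zero, Matrix.mulVecLin_one, LinearMap.ker_id, Submodule.mem_bot] at hmem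
        have := congrFun hmem 2
        simp at this
      · intro h
        have he : (M ^ 2).mulVecLin ![u, -1, 0] = 0 := by
          rw [hM2, Matrix.mulVecLin_apply]
          funext i
          fin_cases i <;>
            simp [Matrix.mulVec, dotProduct, Fin.sum_univ_three] <;> ring_nf
        have hmem : (![u, -1, 0] : Fin 3 → ℂ) ∈ LinearMap.ker (M ^ 1).mulVecLin := by
          rw [h]; exact he
        rw [LinearMap.mem_ker, pow_one, Matrix.mulVecLin_apply, hMdef] at hmem
        have := congrFun hmem 2
        simp [Matrix.mulVec, dotProduct, Fin.sum_univ_three] at this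
        try field_simp [hvu] at this
      · intro h
        have he : (M ^ 3).mulVecLin ![1, 0, 0] = 0 := by rw [hM3]; simp
        have hmem : (![1, 0, 0] : Fin 3 → ℂ) ∈ LinearMap.ker (M ^ 2).mulVecLin := by
          rw [h]; exact he
        rw [LinearMap.mem_ker, hM2, Matrix.mulVecLin_apply] at hmem
        have := congrFun hmem 2
        simp [Matrix.mulVec, dotProduct, Fin.sum_univ_three] at this
  have haN : ascentM N = 2 := by
    have key := ascentM_eq N 2 ?_ ?_
    · exact_mod_cast key
    · rw [show (2 : ℕ) + 1 = 3 from rfl]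
      ext x
      rw [LinearMap.mem_ker, LinearMap.mem_ker, hN3, Matrix.mulVecLin_apply,
        Matrix.mulVecLin_apply, Matrix.smul_mulVec, smul_eq_zero]
      have hc : (2 : ℂ) * (v - u) ≠ 0 := mul_ne_zero two_ne_zero hvu
      tauto
    · intro m hm
      interval_cases m
      · intro h
        have he : (N ^ 1).mulVecLin ![0, 0, 1] = 0 := by
          rw [pow_one, Matrix.mulVecLin_apply, hNdef]
          funext i
          fin_cases i <;> simp [Matrix.mulVec, dotProduct, Fin.sum_univ_three]
        have hmem : (![0, 0, 1] : Fin 3 → ℂ) ∈ LinearMap.ker (N ^ 0).mulVecLin := by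
          rw [h]; exact he
        rw [pow_zero, Matrix.mulVecLin_one, LinearMap.ker_id, Submodule.mem_bot] at hmem
        have := congrFun hmem 2
        simp at this
      · intro h
        have he : (N ^ 2).mulVecLin ![v, -1, 0] = 0 := by
          rw [hN2, Matrix.mulVecLin_apply]
          funext i
          fin_cases i <;>
            simp [Matrix.mulVec, dotProduct, Fin.sum_univ_three] <;> ring_nf
        have hmem : (![v, -1, 0] : Fin 3 → ℂ) ∈ LinearMap.ker (N ^ 1).mulVecLin := by
          rw [h]; exact he
        rw [LinearMap.mem_ker, pow_one, Matrix.mulVecLin_apply, hNdef] at hmem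
        have := congrFun hmem 2
        simp [Matrix.mulVec, dotProduct, Fin.sum_univ_three] at this
        try field_simp [hvu] at this
  refine ⟨by rw [hM]; exact haM, by rw [hM, descentM_eq_ascentM]; exact haM,
    by rw [hN]; exact haN, by rw [hN, descentM_eq_ascentM]; exact haN, ?_, ?_, ?_⟩
  · rw [pow_two]
    ext i j
    fin_cases i <;> fin_cases j <;>
      simp [T, Matrix.mul_apply, Fin.sum_univ_three, Matrix.one_apply] <;>
      first
        | rfl
        | ring1
        | (field_simp [hvu]; ring1)
  · intro h
    rw [pow_two] at h
    have := congrFun (congrFun h 1) 0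
    simp [T, Matrix.mul_apply, Fin.sum_univ_three] at this
    exact hu this
  · intro h
    have := congrFun (congrFun h 2) 1
    simp [T, Matrix.mul_apply, Fin.sum_univ_three, Matrix.one_apply] at this
    exact hu this
end

section
/- Let X be a complex Banach space with dim X ≥ 3 and let A ∈ B(X). Then A = 0 if and only if α(ATA) = 1 and α(TAT) = 1 for every T ∈ B(X). -/
/-- The ascent of a bounded linear operator: the least `n : ℕ` with
`ker (T ^ n) = ker (T ^ (n+1))`, and `⊤` (i.e. `∞`) if no such `n` exists. -/
noncomputable def ascent {X : Type*} [NormedAddCommGroup X] [NormedSpace ℂ X]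
    (T : X →L[ℂ] X) : ℕ∞ :=
  sInf (Nat.cast '' {m : ℕ | LinearMap.ker ((T ^ m : X →L[ℂ] X) : X →ₗ[ℂ] X) = LinearMap.ker ((T ^ (m + 1) : X →L[ℂ] X) : X →ₗ[ℂ] X)})

/-- The descent of a bounded linear operator: the least `n : ℕ` with
`range (T ^ n) = range (T ^ (n+1))`, and `⊤` (i.e. `∞`) if no such `n` exists. -/
noncomputable def descent {X : Type*} [NormedAddCommGroup X] [NormedSpace ℂ X]
    (T : X →L[ℂ] X) : ℕ∞ :=
  sInf (Nat.cast '' {m : ℕ | LinearMap.range ((T ^ m : X →L[ℂ] X) : X →ₗ[ℂ] X) = LinearMap.range ((T ^ (m + 1) : X →L[ℂ] X) : X →ₗ[ℂ] X)})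

/-- Separating a point from a line by a continuous linear functional. -/
theorem exists_fun_sep {X : Type*} [NormedAddCommGroup X] [NormedSpace ℂ X]
    (y z : X) (hli : LinearIndependent ℂ ![z, y]) :
    ∃ f : X →L[ℂ] ℂ, f z = 1 ∧ f y = 0 := by
  set p := Submodule.span ℂ (Set.range ![z, y]) with hp
  set B := Module.Basis.span hli with hB
  have : FiniteDimensional ℂ p := Module.Finite.of_basis B
  set f₀ : p →L[ℂ] ℂ := LinearMap.toContinuousLinearMap (B.coord 0) with hf₀
  obtain ⟨g, hg, -⟩ := exists_extension_norm_eq p f₀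
  have hzmem : z ∈ p := Submodule.subset_span ⟨0, rfl⟩
  have hymem : y ∈ p := Submodule.subset_span ⟨1, rfl⟩
  have h0 : (⟨z, hzmem⟩ : p) = B 0 := Subtype.ext (by rw [hB, Module.Basis.span_apply]; rfl)
  have h1 : (⟨y, hymem⟩ : p) = B 1 := Subtype.ext (by rw [hB, Module.Basis.span_apply]; rfl)
  refine ⟨g, ?_, ?_⟩
  · calc g z = f₀ ⟨z, hzmem⟩ := hg ⟨_, ‹_›⟩
    _ = f₀ (B 0) := by rw [h0]
    _ = 1 := by simp [hf₀]
  · calc g y = f₀ ⟨y, hymem⟩ := hg ⟨_, ‹_›⟩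
    _ = f₀ (B 1) := by rw [h1]
    _ = 0 := by simp [hf₀]

theorem ascent_eq_one' {X : Type*} [NormedAddCommGroup X] [NormedSpace ℂ X]
    (T : X →L[ℂ] X) (h1 : LinearMap.ker ((T ^ 1 : X →L[ℂ] X) : X →ₗ[ℂ] X) = LinearMap.ker ((T ^ 2 : X →L[ℂ] X) : X →ₗ[ℂ] X))
    (h0 : LinearMap.ker ((T ^ 0 : X →L[ℂ] X) : X →ₗ[ℂ] X) ≠ LinearMap.ker ((T ^ 1 : X →L[ℂ] X) : X →ₗ[ℂ] X)) : ascent T = 1 := by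
  apply le_antisymm
  · exact sInf_le ⟨1, h1, rfl⟩
  · refine le_sInf ?_
    rintro a ⟨m, hm, rfl⟩
    have : m ≠ 0 := by rintro rfl; exact h0 hm
    exact_mod_cast Nat.one_le_iff_ne_zero.2 this

theorem ascent_ne_one' {X : Type*} [NormedAddCommGroup X] [NormedSpace ℂ X]
    (T : X →L[ℂ] X) (h0 : LinearMap.ker ((T ^ 0 : X →L[ℂ] X) : X →ₗ[ℂ] X) ≠ LinearMap.ker ((T ^ 1 : X →L[ℂ] X) : X →ₗ[ℂ] X))
    (h1 : LinearMap.ker ((T ^ 1 : X →L[ℂ] X) : X →ₗ[ℂ] X) ≠ LinearMap.ker ((T ^ 2 : X →L[ℂ] X) : X →ₗ[ℂ] X)) : ascent T ≠ 1 := by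
  intro h
  have h2 : (2 : ℕ∞) ≤ ascent T := by
    refine le_sInf ?_
    rintro a ⟨m, hm, rfl⟩
    have hm0 : m ≠ 0 := by rintro rfl; exact h0 hm
    have hm1 : m ≠ 1 := by rintro rfl; exact h1 hm
    exact_mod_cast Nat.two_le_iff m |>.2 ⟨hm0, hm1⟩
  rw [h] at h2
  norm_num at h2

theorem ascent_zero {X : Type*} [NormedAddCommGroup X] [NormedSpace ℂ X]
    [Nontrivial X] : ascent (0 : X →L[ℂ] X) = 1 := by
  apply ascent_eq_one'
  · simp [pow_succ]
  · simp only [pow_zero, pow_one]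
    intro h
    have h2 : LinearMap.ker ((0 : X →L[ℂ] X) : X →ₗ[ℂ] X) = ⊤ := by ext x; simp
    have h1 : LinearMap.ker ((1 : X →L[ℂ] X) : X →ₗ[ℂ] X) = ⊥ := by ext x; simp
    rw [h1, h2] at h
    exact bot_ne_top h

theorem eq_zero_iff_ascent_triple_eq_one {X : Type*} [NormedAddCommGroup X]
    [NormedSpace ℂ X] [CompleteSpace X] (hdim : 3 ≤ Module.rank ℂ X)
    (A : X →L[ℂ] X) :
    A = 0 ↔ ∀ T : X →L[ℂ] X, ascent (A * T * A) = 1 ∧ ascent (T * A * T) = 1 := by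
  have hnt : Nontrivial X := by
    rw [← rank_pos_iff_nontrivial (R := ℂ)]
    exact lt_of_lt_of_le (by norm_num) hdim
  constructor
  · rintro rfl T
    constructor
    · rw [zero_mul, zero_mul]; exact ascent_zero
    · rw [mul_zero, zero_mul]; exact ascent_zero
  · intro h
    -- Step 1: every vector is mapped to a multiple of itself
    have key : ∀ y : X, ∃ c : ℂ, A y = c • y := by
      intro y
      by_contra hy
      push_neg at hy
      have hy0 : y ≠ 0 := by
        rintro rfl
        exact hy 0 (by simp)
      have hli : LinearIndependent ℂ ![A y, y] := by
        rw [linearIndependent_fin2]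
        refine ⟨hy0, fun a ha => hy a ?_⟩
        simpa using ha.symm
      obtain ⟨f, hfz, hfy⟩ := exists_fun_sep y (A y) hli
      set T := f.smulRight y with hTdef
      have hT : ∀ z, T z = f z • y := fun z => rfl
      have hSapp : ∀ z, (T * A * T) z = (f z * f (A y)) • y := by
        intro z
        show T (A (T z)) = _
        rw [hT z, map_smul, hT, map_smul, smul_eq_mul]
      have hS1 : (T * A * T) y = 0 := by rw [hSapp, hfy, zero_mul, zero_smul]
      have hS2 : (T * A * T) (A y) = y := by rw [hSapp, hfz, one_mul, one_smul]
      refine ascent_ne_one' (T * A * T) ?_ ?_ (h T).2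
      · intro heq
        have hy' : y ∈ LinearMap.ker (((T * A * T) ^ 1 : X →L[ℂ] X) : X →ₗ[ℂ] X) := by
          rw [pow_one]; exact LinearMap.mem_ker.2 hS1
        rw [← heq, pow_zero] at hy'
        have : (1 : X →L[ℂ] X) y = 0 := LinearMap.mem_ker.1 hy'
        simp only [ContinuousLinearMap.one_apply] at this
        exact hy0 this
      · intro heq
        have hAy' : A y ∈ LinearMap.ker (((T * A * T) ^ 2 : X →L[ℂ] X) : X →ₗ[ℂ] X) := by
          refine LinearMap.mem_ker.2 ?_
          have : ((T * A * T) ^ 2) (A y) = (T * A * T) ((T * A * T) (A y)) := by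
            rw [pow_two]; rfl
          rw [ContinuousLinearMap.coe_coe, this, hS2, hS1]
        rw [← heq, pow_one] at hAy'
        have := LinearMap.mem_ker.1 hAy'
        rw [ContinuousLinearMap.coe_coe, hS2] at this
        exact hy0 this
    -- Step 2: A has nontrivial kernel
    have hw : ∃ w : X, w ≠ 0 ∧ A w = 0 := by
      by_contra hcon
      push_neg at hcon
      have h1 := (h 1).1
      have hker : LinearMap.ker (((A * 1 * A) ^ 1 : X →L[ℂ] X) : X →ₗ[ℂ] X) = ⊥ := by
        rw [pow_one, Submodule.eq_bot_iff]
        intro x hx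
        have hx' : A ((1 : X →L[ℂ] X) (A x)) = 0 := LinearMap.mem_ker.1 hx
        simp only [ContinuousLinearMap.one_apply] at hx'
        by_contra hx0
        by_cases hAx : A x = 0
        · exact hcon x hx0 hAx
        · exact hcon (A x) hAx hx'
      have h0mem : (0 : ℕ) ∈ {m : ℕ | LinearMap.ker (((A * 1 * A) ^ m : X →L[ℂ] X) : X →ₗ[ℂ] X)
          = LinearMap.ker (((A * 1 * A) ^ (m + 1) : X →L[ℂ] X) : X →ₗ[ℂ] X)} := by
        show LinearMap.ker (((A * 1 * A) ^ 0 : X →L[ℂ] X) : X →ₗ[ℂ] X) = LinearMap.ker (((A * 1 * A) ^ 1 : X →L[ℂ] X) : X →ₗ[ℂ] X)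
        rw [hker, pow_zero]
        ext x; simp
      have hle : ascent (A * 1 * A) ≤ 0 := sInf_le ⟨0, h0mem, rfl⟩
      rw [h1] at hle
      norm_num at hle
    -- Step 3: conclude A = 0
    obtain ⟨w, hw0, hAw⟩ := hw
    ext x
    show A x = 0
    by_cases hx : x = 0
    · simp [hx]
    obtain ⟨c, hc⟩ := key x
    obtain ⟨d, hd⟩ := key (x + w)
    have he : c • x = d • x + d • w := by
      have : A (x + w) = c • x := by rw [map_add, hAw, add_zero, hc]
      rw [hd, smul_add] at this
      exact this.symm
    by_cases hdz : d = 0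
    · rw [hdz, zero_smul, zero_smul, add_zero] at he
      rcases smul_eq_zero.1 he with hc0 | hx0
      · rw [hc, hc0, zero_smul]
      · exact absurd hx0 hx
    · have hdw : d • w = (c - d) • x := by
        rw [sub_smul]
        rw [eq_sub_iff_add_eq, add_comm]
        exact he.symm
      have hwx : w = (d⁻¹ * (c - d)) • x := by
        have := congrArg (fun v => d⁻¹ • v) hdw
        simpa [smul_smul, inv_mul_cancel₀ hdz, mul_assoc] using this
      have hAwx : (d⁻¹ * (c - d) * c) • x = 0 := by
        have : A ((d⁻¹ * (c - d)) • x) = 0 := by rw [← hwx]; exact hAw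
        rw [map_smul, hc, smul_smul] at this
        exact this
      rcases smul_eq_zero.1 hAwx with hcoef | hx0
      swap
      · exact absurd hx0 hx
      rcases mul_eq_zero.1 hcoef with hcoef2 | hc0
      · rcases mul_eq_zero.1 hcoef2 with hinv | hcd
        · exact absurd (inv_eq_zero.1 hinv) hdz
        · rw [hcd, mul_zero, zero_smul] at hwx
          exact absurd hwx hw0
      · rw [hc, hc0, zero_smul]
end

section
/- Let X be a complex Banach space with dim X ≥ 3 and let A ∈ B(X). Then A = 0 if and only if δ(ATA) = 1 and δ(TAT) = 1 for every T ∈ B(X). -/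
lemma descent_zero {X : Type*} [NormedAddCommGroup X] [NormedSpace ℂ X] [Nontrivial X] :
    descent (0 : X →L[ℂ] X) = 1 := by
  unfold descent
  apply le_antisymm
  · apply sInf_le
    refine ⟨1, ?_, rfl⟩
    simp only [Set.mem_setOf_eq, pow_one]
    rw [zero_pow (by norm_num : (1 + 1 : ℕ) ≠ 0)]
  · apply le_sInf
    rintro b ⟨m, hm, rfl⟩
    simp only [Set.mem_setOf_eq] at hm
    rcases Nat.eq_zero_or_pos m with rfl | hpos
    · exfalso
      rw [pow_zero, zero_pow (Nat.succ_ne_zero 0)] at hm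
      obtain ⟨x, hx⟩ := exists_ne (0 : X)
      have hxr : x ∈ LinearMap.range (((1 : X →L[ℂ] X) : X →ₗ[ℂ] X)) := ⟨x, rfl⟩
      rw [hm] at hxr
      obtain ⟨y, hy⟩ := hxr
      exact hx (by simpa using hy.symm)
    · exact_mod_cast hpos

theorem eq_zero_iff_descent_triple_eq_one {X : Type*} [NormedAddCommGroup X]
    [NormedSpace ℂ X] [CompleteSpace X] (hdim : 3 ≤ Module.rank ℂ X)
    (A : X →L[ℂ] X) :
    A = 0 ↔ ∀ T : X →L[ℂ] X, descent (A * T * A) = 1 ∧ descent (T * A * T) = 1 := by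
  have hnt : Nontrivial X := by
    rw [← rank_pos_iff_nontrivial (R := ℂ)]
    calc (0 : Cardinal) < 3 := by norm_num
    _ ≤ Module.rank ℂ X := hdim
  constructor
  · rintro rfl T
    constructor <;> simp only [zero_mul, mul_zero, descent_zero]
  · intro h
    by_contra hA
    by_cases hspan : ∀ u : X, A u ∈ Submodule.span ℂ {u}
    · -- A = a • id with a ≠ 0, so A * 1 * A is surjective, descent = 0
      obtain ⟨v, hv⟩ : ∃ v, A v ≠ 0 := by
        by_contra hc
        push_neg at hc
        exact hA (ContinuousLinearMap.ext fun x => by simp [hc x])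
      obtain ⟨a, ha⟩ := Submodule.mem_span_singleton.mp (hspan v)
      have hv0 : v ≠ 0 := fun h0 => hv (by simp [h0])
      have ha0 : a ≠ 0 := by
        rintro rfl
        rw [zero_smul] at ha
        exact hv ha.symm
      have key : ∀ x : X, A x = a • x := by
        intro x
        obtain ⟨b, hb⟩ := Submodule.mem_span_singleton.mp (hspan x)
        by_cases hx : x ∈ Submodule.span ℂ {v}
        · obtain ⟨t, ht⟩ := Submodule.mem_span_singleton.mp hx
          rw [← ht, map_smul, ← ha, smul_comm]
        · obtain ⟨c, hc⟩ := Submodule.mem_span_singleton.mp (hspan (x + v))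
          have hsum : c • x + c • v = b • x + a • v := by
            rw [← smul_add, hc, map_add, ← hb, ← ha]
          have h1 : (c - b) • x = (a - c) • v := by
            linear_combination (norm := module) hsum
          have hcb : c = b := by
            by_contra hcb
            apply hx
            refine Submodule.mem_span_singleton.mpr ⟨(c - b)⁻¹ * (a - c), ?_⟩
            rw [mul_smul, ← h1, smul_smul, inv_mul_cancel₀ (sub_ne_zero.mpr hcb), one_smul]
          have h2 : (a - b) • v = 0 := by
            rw [hcb, sub_self, zero_smul] at h1
            exact h1.symm
          have hca : a = b := by
            rcases smul_eq_zero.mp h2 with h' | h'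
            · exact sub_eq_zero.mp h'
            · exact absurd h' hv0
          rw [← hb, hca]
      -- A * 1 * A is surjective
      have hsurj : Function.Surjective ⇑(A * 1 * A) := by
        intro y
        refine ⟨(a * a)⁻¹ • y, ?_⟩
        simp only [ContinuousLinearMap.mul_apply, ContinuousLinearMap.one_apply]
        rw [key, key, smul_smul, smul_smul, mul_inv_cancel₀ (mul_ne_zero ha0 ha0), one_smul]
      have h0mem : (0 : ℕ) ∈ {m : ℕ | LinearMap.range (((A * 1 * A) ^ m : X →L[ℂ] X) : X →ₗ[ℂ] X)
          = LinearMap.range (((A * 1 * A) ^ (m + 1) : X →L[ℂ] X) : X →ₗ[ℂ] X)} := by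
        simp only [Set.mem_setOf_eq, pow_zero, zero_add, pow_one]
        rw [LinearMap.range_eq_top.mpr hsurj]
        exact LinearMap.range_eq_top.mpr fun x => ⟨x, by simp⟩
      have hle : descent (A * 1 * A) ≤ 0 := sInf_le ⟨0, h0mem, rfl⟩
      rw [(h 1).1] at hle
      exact absurd hle (by norm_num)
    · push_neg at hspan
      obtain ⟨u, hu⟩ := hspan
      have hu0 : u ≠ 0 := by
        rintro rfl
        exact hu (by simp)
      -- build g : X →L[ℂ] ℂ with g u = 0 and g (A u) = 1
      set w : Fin 2 → X := ![A u, u] with hw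
      have hli : LinearIndependent ℂ w := by
        rw [linearIndependent_fin2]
        refine ⟨by simpa [hw] using hu0, fun a hau => ?_⟩
        exact hu (Submodule.mem_span_singleton.mpr ⟨a, by simpa [hw] using hau⟩)
      set p : Submodule ℂ X := Submodule.span ℂ (Set.range w) with hp
      haveI : FiniteDimensional ℂ p := FiniteDimensional.span_of_finite ℂ (Set.finite_range w)
      set b : Module.Basis (Fin 2) ℂ p := Module.Basis.span hli with hb
      set f₀ : p →L[ℂ] ℂ := LinearMap.toContinuousLinearMap (b.coord 0) with hf₀
      obtain ⟨g, hg, -⟩ := exists_extension_norm_eq p f₀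
      have hmemAu : A u ∈ p := Submodule.subset_span ⟨0, by simp [hw]⟩
      have hmemu : u ∈ p := Submodule.subset_span ⟨1, by simp [hw]⟩
      have hb0 : b 0 = ⟨A u, hmemAu⟩ := by
        apply Subtype.ext
        rw [hb, Module.Basis.span_apply]
        simp [hw]
      have hb1 : b 1 = ⟨u, hmemu⟩ := by
        apply Subtype.ext
        rw [hb, Module.Basis.span_apply]
        simp [hw]
      have hcoe0 : ((b 0 : p) : X) = A u := by rw [hb0]
      have hcoe1 : ((b 1 : p) : X) = u := by rw [hb1]
      have hgAu : g (A u) = 1 := by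
        rw [← hcoe0, hg (b 0)]
        simp [hf₀]
      have hgu : g u = 0 := by
        rw [← hcoe1, hg (b 1)]
        simp [hf₀]
      set T : X →L[ℂ] X := g.smulRight u with hT
      set S : X →L[ℂ] X := T * A * T with hS
      have hSx : ∀ x, S x = g x • u := by
        intro x
        simp only [hS, hT, ContinuousLinearMap.mul_apply, ContinuousLinearMap.smulRight_apply,
          map_smul, smul_eq_mul, hgAu, mul_one, one_smul]
      have hS2 : S * S = 0 := by
        ext x
        simp only [ContinuousLinearMap.mul_apply, ContinuousLinearMap.zero_apply]
        rw [hSx x, hSx, map_smul, smul_eq_mul, hgu, mul_zero, zero_smul]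
      have hmem2 : ∀ m ∈ {m : ℕ | LinearMap.range ((S ^ m : X →L[ℂ] X) : X →ₗ[ℂ] X) = LinearMap.range ((S ^ (m + 1) : X →L[ℂ] X) : X →ₗ[ℂ] X)},
          2 ≤ m := by
        intro m hm
        simp only [Set.mem_setOf_eq] at hm
        by_contra hlt
        interval_cases m
        · -- range S^0 = ⊤ = range S, but A u ∉ range S
          rw [pow_zero, pow_one] at hm
          have : A u ∈ LinearMap.range ((S : X →L[ℂ] X) : X →ₗ[ℂ] X) := by
            rw [← hm]; exact ⟨A u, rfl⟩
          obtain ⟨x, hx⟩ := this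
          rw [ContinuousLinearMap.coe_coe, hSx] at hx
          exact hu (Submodule.mem_span_singleton.mpr ⟨g x, hx⟩)
        · -- range S = range S^2 = ⊥, but u ∈ range S
          rw [pow_one, show S ^ (1 + 1) = S * S from sq S, hS2] at hm
          have hur : u ∈ LinearMap.range ((S : X →L[ℂ] X) : X →ₗ[ℂ] X) := ⟨A u, by rw [ContinuousLinearMap.coe_coe, hSx, hgAu, one_smul]⟩
          rw [hm] at hur
          obtain ⟨x, hx⟩ := hur
          exact hu0 (by simpa using hx.symm)
      have hge : (2 : ℕ∞) ≤ descent S := by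
        apply le_sInf
        rintro c ⟨m, hm, rfl⟩
        exact_mod_cast hmem2 m hm
      rw [(h T).2] at hge
      exact absurd hge (by norm_num)
end

section
/- Let X be a complex Banach space with dim X ≥ 3 and let A ∈ B(X) with A ≠ 0. Then the range of A is one-dimensional if and only if for every T ∈ B(X), α(ATA) ∈ {1, 2} and α(TAT) ∈ {1, 2}. -/
namespace RankOneAscentAux

open Submodule Set ContinuousLinearMap

variable {X : Type*} [NormedAddCommGroup X] [NormedSpace ℂ X]

lemma sInf_image_eq {S : Set ℕ} {n : ℕ} (hn : n ∈ S) (hb : ∀ m ∈ S, n ≤ m) :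
    sInf ((Nat.cast '' S : Set ℕ∞)) = (n : ℕ∞) := by
  refine le_antisymm (sInf_le ⟨n, hn, rfl⟩) (le_sInf ?_)
  rintro b ⟨m, hm, rfl⟩
  exact_mod_cast hb m hm

lemma mem_of_sInf_image_eq {S : Set ℕ} {n : ℕ}
    (h : sInf ((Nat.cast '' S : Set ℕ∞)) = (n : ℕ∞)) : n ∈ S := by
  rcases S.eq_empty_or_nonempty with hS | hS
  · rw [hS] at h
    simp at h
  · have h2 : sInf ((Nat.cast '' S : Set ℕ∞)) = ((sInf S : ℕ) : ℕ∞) :=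
      sInf_image_eq (Nat.sInf_mem hS) fun m hm => Nat.sInf_le hm
    rw [h2] at h
    have h3 : sInf S = n := by exact_mod_cast h
    exact h3 ▸ Nat.sInf_mem hS

lemma pow_two_apply (M : X →L[ℂ] X) (x : X) : (M ^ 2) x = M (M x) := by
  rw [sq]; rfl

lemma pow_three_apply (M : X →L[ℂ] X) (x : X) : (M ^ 3) x = M (M (M x)) := by
  rw [pow_succ, sq]; rfl

lemma ker_step (T : X →L[ℂ] X) (m : ℕ)
    (h : LinearMap.ker ((T ^ m : X →L[ℂ] X) : X →ₗ[ℂ] X) = LinearMap.ker ((T ^ (m + 1) : X →L[ℂ] X) : X →ₗ[ℂ] X)) :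
    LinearMap.ker ((T ^ (m + 1) : X →L[ℂ] X) : X →ₗ[ℂ] X) = LinearMap.ker ((T ^ (m + 2) : X →L[ℂ] X) : X →ₗ[ℂ] X) := by
  ext x
  simp only [LinearMap.mem_ker, ContinuousLinearMap.coe_coe]
  constructor
  · intro hx
    have h1 : (T ^ (m + 2)) x = T ((T ^ (m + 1)) x) := by
      rw [pow_succ']; rfl
    rw [h1, hx, map_zero]
  · intro hx
    have h1 : (T ^ (m + 1)) (T x) = 0 := by
      have h2 : (T ^ (m + 2)) x = (T ^ (m + 1)) (T x) := by rw [pow_succ]; rfl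
      rw [← h2, hx]
    have h2 : T x ∈ LinearMap.ker ((T ^ m : X →L[ℂ] X) : X →ₗ[ℂ] X) := by
      rw [h]; exact LinearMap.mem_ker.mpr h1
    have h3 : (T ^ m) (T x) = 0 := LinearMap.mem_ker.mp h2
    calc (T ^ (m + 1)) x = (T ^ m) (T x) := by rw [pow_succ]; rfl
    _ = 0 := h3

lemma ker_two_eq_three_of_ascent_mem {T : X →L[ℂ] X}
    (h : ascent T ∈ ({1, 2} : Set ℕ∞)) :
    LinearMap.ker ((T ^ 2 : X →L[ℂ] X) : X →ₗ[ℂ] X) = LinearMap.ker ((T ^ 3 : X →L[ℂ] X) : X →ₗ[ℂ] X) := by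
  simp only [Set.mem_insert_iff, Set.mem_singleton_iff] at h
  rcases h with h1 | h2
  · have h1' : sInf ((Nat.cast ''
        {m : ℕ | LinearMap.ker ((T ^ m : X →L[ℂ] X) : X →ₗ[ℂ] X) = LinearMap.ker ((T ^ (m + 1) : X →L[ℂ] X) : X →ₗ[ℂ] X)}) : Set ℕ∞)
        = ((1 : ℕ) : ℕ∞) := by exact_mod_cast h1
    exact ker_step T 1 (mem_of_sInf_image_eq h1')
  · have h2' : sInf ((Nat.cast ''
        {m : ℕ | LinearMap.ker ((T ^ m : X →L[ℂ] X) : X →ₗ[ℂ] X) = LinearMap.ker ((T ^ (m + 1) : X →L[ℂ] X) : X →ₗ[ℂ] X)}) : Set ℕ∞)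
        = ((2 : ℕ) : ℕ∞) := by exact_mod_cast h2
    exact mem_of_sInf_image_eq h2'

lemma ker_ne_bot_of_ascent_mem {T : X →L[ℂ] X}
    (h : ascent T ∈ ({1, 2} : Set ℕ∞)) : LinearMap.ker (T : X →ₗ[ℂ] X) ≠ ⊥ := by
  intro hbot
  have hk0 : LinearMap.ker ((T ^ 0 : X →L[ℂ] X) : X →ₗ[ℂ] X) = ⊥ := by
    rw [pow_zero]
    ext x
    simp [LinearMap.mem_ker, ContinuousLinearMap.one_apply]
  have h0 : (0 : ℕ) ∈ {m : ℕ | LinearMap.ker ((T ^ m : X →L[ℂ] X) : X →ₗ[ℂ] X) = LinearMap.ker ((T ^ (m + 1) : X →L[ℂ] X) : X →ₗ[ℂ] X)} := by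
    simp only [Set.mem_setOf_eq, hk0, zero_add, pow_one, hbot]
  have hle : ascent T ≤ ((0 : ℕ) : ℕ∞) := sInf_le ⟨0, h0, rfl⟩
  simp only [Set.mem_insert_iff, Set.mem_singleton_iff] at h
  rcases h with h | h <;> rw [h] at hle <;> simp at hle

lemma contra_of_chain {M : X →L[ℂ] X} (h : ascent M ∈ ({1, 2} : Set ℕ∞))
    {z y : X} (h2 : (M ^ 2) z = y) (hy : y ≠ 0) (h3 : (M ^ 3) z = 0) : False := by
  have hk := ker_two_eq_three_of_ascent_mem h
  have hz : z ∈ LinearMap.ker ((M ^ 3 : X →L[ℂ] X) : X →ₗ[ℂ] X) := LinearMap.mem_ker.mpr h3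
  rw [← hk] at hz
  exact hy (h2 ▸ LinearMap.mem_ker.mp hz)

lemma exists_dual_family {n : ℕ} {v : Fin n → X} (hv : LinearIndependent ℂ v) :
    ∃ g : Fin n → (X →L[ℂ] ℂ), ∀ i j, (g i) (v j) = if j = i then 1 else 0 := by
  haveI hfin : FiniteDimensional ℂ (span ℂ (Set.range v)) :=
    FiniteDimensional.span_of_finite ℂ (Set.finite_range v)
  let b : Module.Basis (Fin n) ℂ (span ℂ (Set.range v)) := Module.Basis.span hv
  have key : ∀ i : Fin n, ∃ g : X →L[ℂ] ℂ,
      ∀ y : span ℂ (Set.range v), g y = b.coord i y := by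
    intro i
    let f : (span ℂ (Set.range v)) →L[ℂ] ℂ := LinearMap.toContinuousLinearMap (b.coord i)
    obtain ⟨g, hg, -⟩ := exists_extension_norm_eq (span ℂ (Set.range v)) f
    exact ⟨g, fun y => hg y⟩
  choose g hg using key
  refine ⟨g, fun i j => ?_⟩
  have hvj : v j ∈ span ℂ (Set.range v) := subset_span (Set.mem_range_self j)
  have h1 := hg i ⟨v j, hvj⟩
  have hbj : (⟨v j, hvj⟩ : span ℂ (Set.range v)) = b j := by
    apply Subtype.ext
    simp [b, Module.Basis.span_apply]
  rw [h1, hbj, Module.Basis.coord_apply, b.repr_self_apply]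

lemma exists_clm_of_values {n : ℕ} {v : Fin n → X} (hv : LinearIndependent ℂ v)
    (t : Fin n → X) : ∃ T : X →L[ℂ] X, ∀ j, T (v j) = t j := by
  obtain ⟨g, hg⟩ := exists_dual_family hv
  refine ⟨∑ i, (g i).smulRight (t i), fun j => ?_⟩
  rw [ContinuousLinearMap.sum_apply]
  simp only [ContinuousLinearMap.smulRight_apply, hg, ite_smul, one_smul, zero_smul]
  simp [Finset.sum_ite_eq]

lemma pair_comb {a b : X} (hind : LinearIndependent ℂ ![a, b]) {s t : ℂ}
    (h : s • a + t • b = 0) : s = 0 ∧ t = 0 := by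
  have := Fintype.linearIndependent_iff.mp hind ![s, t] (by
    rw [Fin.sum_univ_two]
    simpa using h)
  exact ⟨this 0, this 1⟩

lemma pair_indep {a b : X} (ha : a ≠ 0) (hb : b ∉ span ℂ ({a} : Set X)) :
    LinearIndependent ℂ ![a, b] := by
  rw [Fintype.linearIndependent_iff]
  intro c hc
  rw [Fin.sum_univ_two] at hc
  simp only [Matrix.cons_val_zero, Matrix.cons_val_one, Matrix.head_cons] at hc
  by_cases h1 : c 1 = 0
  · rw [h1, zero_smul, add_zero] at hc
    have h0 : c 0 = 0 := by
      rcases smul_eq_zero.mp hc with h | h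
      · exact h
      · exact absurd h ha
    intro i
    fin_cases i
    · exact h0
    · exact h1
  · exfalso
    apply hb
    rw [Submodule.mem_span_singleton]
    refine ⟨-(c 1)⁻¹ * c 0, ?_⟩
    have hc' : c 1 • b = -(c 0 • a) := eq_neg_of_add_eq_zero_left (by rw [add_comm]; exact hc)
    have hthis : b = -(c 1)⁻¹ • (c 0 • a) := by
      calc b = (c 1)⁻¹ • (c 1 • b) := by rw [smul_smul, inv_mul_cancel₀ h1, one_smul]
      _ = (c 1)⁻¹ • (-(c 0 • a)) := by rw [hc']
      _ = -(c 1)⁻¹ • (c 0 • a) := by rw [neg_smul, smul_neg]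
    rw [mul_smul, hthis]

lemma exists_notin_span {U : Submodule ℂ X} (hr1 : Module.rank ℂ ↥U ≠ 1)
    {u : X} (hu : u ∈ U) (hune : u ≠ 0) : ∃ y, y ∈ U ∧ y ∉ span ℂ ({u} : Set X) := by
  by_contra hcon
  push_neg at hcon
  apply hr1
  have hle : Module.rank ℂ ↥U ≤ 1 := by
    rw [rank_le_one_iff]
    refine ⟨⟨u, hu⟩, fun v => ?_⟩
    obtain ⟨r, hr⟩ := Submodule.mem_span_singleton.mp (hcon (v : X) v.2)
    exact ⟨r, Subtype.ext (by simpa using hr)⟩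
  have hnt : Nontrivial ↥U := ⟨⟨⟨u, hu⟩, 0, by simp [Subtype.ext_iff, hune]⟩⟩
  have hge : 1 ≤ Module.rank ℂ ↥U :=
    Cardinal.one_le_iff_pos.mpr (rank_pos_iff_nontrivial.mpr hnt)
  exact le_antisymm hle hge

lemma ascent_smulRight_mem (hnt : Nontrivial X)
    (hker : ∀ ψ : X →L[ℂ] ℂ, ∃ x : X, x ≠ 0 ∧ ψ x = 0)
    (ψ : X →L[ℂ] ℂ) (v : X) :
    ascent (ψ.smulRight v) ∈ ({1, 2} : Set ℕ∞) := by
  classical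
  set N := ψ.smulRight v with hNdef
  have hNapp : ∀ x, N x = ψ x • v := fun x => rfl
  have hN2 : ∀ x, (N ^ 2) x = (ψ x * ψ v) • v := by
    intro x
    rw [pow_two_apply, hNapp (N x), hNapp x, map_smul, smul_eq_mul]
  have hAsc : ascent N = sInf ((Nat.cast ''
      {m : ℕ | LinearMap.ker ((N ^ m : X →L[ℂ] X) : X →ₗ[ℂ] X) = LinearMap.ker ((N ^ (m + 1) : X →L[ℂ] X) : X →ₗ[ℂ] X)}) : Set ℕ∞) := rfl
  obtain ⟨x0, hx0ne, hx0⟩ := hker ψ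
  have hNx0 : N x0 = 0 := by rw [hNapp, hx0, zero_smul]
  have h0notin : (0 : ℕ) ∉
      {m : ℕ | LinearMap.ker ((N ^ m : X →L[ℂ] X) : X →ₗ[ℂ] X) = LinearMap.ker ((N ^ (m + 1) : X →L[ℂ] X) : X →ₗ[ℂ] X)} := by
    intro h0
    rw [Set.mem_setOf_eq] at h0
    have hx0mem : x0 ∈ LinearMap.ker ((N ^ 0 : X →L[ℂ] X) : X →ₗ[ℂ] X) := by
      rw [h0]
      simp [LinearMap.mem_ker, pow_one, hNx0]
    rw [pow_zero] at hx0mem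
    exact hx0ne (by simpa [LinearMap.mem_ker] using hx0mem)
  by_cases hall : ∀ x : X, ψ x • v = 0
  · have hz2 : ∀ x, (N ^ 2) x = 0 := fun x => by
      rw [hN2, mul_comm, mul_smul, hall x, smul_zero]
    have h1 : (1 : ℕ) ∈
        {m : ℕ | LinearMap.ker ((N ^ m : X →L[ℂ] X) : X →ₗ[ℂ] X) = LinearMap.ker ((N ^ (m + 1) : X →L[ℂ] X) : X →ₗ[ℂ] X)} := by
      show LinearMap.ker ((N ^ 1 : X →L[ℂ] X) : X →ₗ[ℂ] X) = LinearMap.ker ((N ^ 2 : X →L[ℂ] X) : X →ₗ[ℂ] X)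
      ext x
      simp only [LinearMap.mem_ker, ContinuousLinearMap.coe_coe]
      simp [LinearMap.mem_ker, pow_one, hNapp, hall x, hz2 x]
    have heq : ascent N = ((1 : ℕ) : ℕ∞) := by
      rw [hAsc]
      exact sInf_image_eq h1 (fun m hm => by
        rcases Nat.eq_zero_or_pos m with rfl | hp
        · exact absurd hm h0notin
        · exact hp)
    rw [heq]
    simp
  · push_neg at hall
    obtain ⟨x1, hx1⟩ := hall
    by_cases hvv : ψ v = 0
    · have hz2 : ∀ x, (N ^ 2) x = 0 := fun x => by rw [hN2, hvv, mul_zero, zero_smul]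
      have hz3 : ∀ x, (N ^ 3) x = 0 := fun x => by
        have h := hz2 x
        rw [pow_two_apply] at h
        rw [pow_three_apply, h, map_zero]
      have h2 : (2 : ℕ) ∈
          {m : ℕ | LinearMap.ker ((N ^ m : X →L[ℂ] X) : X →ₗ[ℂ] X) = LinearMap.ker ((N ^ (m + 1) : X →L[ℂ] X) : X →ₗ[ℂ] X)} := by
        show LinearMap.ker ((N ^ 2 : X →L[ℂ] X) : X →ₗ[ℂ] X) = LinearMap.ker ((N ^ 3 : X →L[ℂ] X) : X →ₗ[ℂ] X)
        ext x
        simp only [LinearMap.mem_ker, ContinuousLinearMap.coe_coe]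
        simp [LinearMap.mem_ker, hz2 x, hz3 x]
      have h1notin : (1 : ℕ) ∉
          {m : ℕ | LinearMap.ker ((N ^ m : X →L[ℂ] X) : X →ₗ[ℂ] X) = LinearMap.ker ((N ^ (m + 1) : X →L[ℂ] X) : X →ₗ[ℂ] X)} := by
        intro h1
        rw [Set.mem_setOf_eq] at h1
        have hx1mem : x1 ∈ LinearMap.ker ((N ^ (1 + 1) : X →L[ℂ] X) : X →ₗ[ℂ] X) := by
          simp only [LinearMap.mem_ker]
          exact hz2 x1
        rw [← h1] at hx1mem
        rw [pow_one] at hx1mem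
        exact hx1 (by simpa [LinearMap.mem_ker, hNapp] using hx1mem)
      have heq : ascent N = ((2 : ℕ) : ℕ∞) := by
        rw [hAsc]
        refine sInf_image_eq h2 (fun m hm => ?_)
        by_contra hlt
        push_neg at hlt
        interval_cases m
        · exact h0notin hm
        · exact h1notin hm
      rw [heq]
      simp
    · have hvne : v ≠ 0 := fun h => hvv (by rw [h, map_zero])
      have h1 : (1 : ℕ) ∈
          {m : ℕ | LinearMap.ker ((N ^ m : X →L[ℂ] X) : X →ₗ[ℂ] X) = LinearMap.ker ((N ^ (m + 1) : X →L[ℂ] X) : X →ₗ[ℂ] X)} := by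
        show LinearMap.ker ((N ^ 1 : X →L[ℂ] X) : X →ₗ[ℂ] X) = LinearMap.ker ((N ^ 2 : X →L[ℂ] X) : X →ₗ[ℂ] X)
        ext x
        simp only [LinearMap.mem_ker, ContinuousLinearMap.coe_coe, pow_one]
        constructor
        · intro hx
          rw [hN2]
          have hψx : ψ x = 0 := by
            rcases smul_eq_zero.mp (by rw [← hNapp x]; exact hx) with h | h
            · exact h
            · exact absurd h hvne
          rw [hψx, zero_mul, zero_smul]
        · intro hx
          rw [hN2 x] at hx
          have hψx : ψ x = 0 := by
            rcases smul_eq_zero.mp hx with h | h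
            · rcases mul_eq_zero.mp h with h' | h'
              · exact h'
              · exact absurd h' hvv
            · exact absurd h hvne
          rw [hNapp, hψx, zero_smul]
      have heq : ascent N = ((1 : ℕ) : ℕ∞) := by
        rw [hAsc]
        exact sInf_image_eq h1 (fun m hm => by
          rcases Nat.eq_zero_or_pos m with rfl | hp
          · exact absurd hm h0notin
          · exact hp)
      rw [heq]
      simp

end RankOneAscentAux
open RankOneAscentAux Submodule Set ContinuousLinearMap in
theorem rank_one_iff_ascent_triple_mem {X : Type*} [NormedAddCommGroup X]
    [NormedSpace ℂ X] [CompleteSpace X] (hdim : 3 ≤ Module.rank ℂ X)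
    (A : X →L[ℂ] X) (hA : A ≠ 0) :
    Module.rank ℂ (LinearMap.range (A : X →ₗ[ℂ] X)) = 1 ↔
      ∀ T : X →L[ℂ] X,
        ascent (A * T * A) ∈ ({1, 2} : Set ℕ∞) ∧ ascent (T * A * T) ∈ ({1, 2} : Set ℕ∞) := by
  classical
  have hnt : Nontrivial X := rank_pos_iff_nontrivial.mp (lt_of_lt_of_le (by norm_num) hdim)
  have hkerfun : ∀ ψ : X →L[ℂ] ℂ, ∃ x : X, x ≠ 0 ∧ ψ x = 0 := by
    intro ψ
    obtain ⟨a, ha⟩ := exists_ne (0 : X)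
    by_cases hψa : ψ a = 0
    · exact ⟨a, ha, hψa⟩
    · have hspan : ∃ b : X, b ∉ span ℂ ({a} : Set X) := by
        by_contra hcon
        push_neg at hcon
        have hle : Module.rank ℂ X ≤ 1 := by
          rw [rank_le_one_iff]
          exact ⟨a, fun y => Submodule.mem_span_singleton.mp (hcon y)⟩
        have h3 : (3 : Cardinal) ≤ 1 := hdim.trans hle
        norm_num at h3
      obtain ⟨b, hb⟩ := hspan
      refine ⟨b - (ψ b / ψ a) • a, ?_, ?_⟩
      · intro h
        apply hb
        rw [sub_eq_zero] at h
        rw [h]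
        exact Submodule.smul_mem _ _ (Submodule.mem_span_singleton_self a)
      · rw [map_sub, map_smul, smul_eq_mul, div_mul_cancel₀ _ hψa, sub_self]
  constructor
  · -- rank one implies the ascent conditions
    intro hr T
    obtain ⟨v₀, hv₀ne, hv₀⟩ := rank_eq_one_iff.mp hr
    set u : X := (v₀ : X) with hudef
    have hune : u ≠ 0 := fun h => hv₀ne (Subtype.ext h)
    obtain ⟨f, hf⟩ := SeparatingDual.exists_eq_one (R := ℂ) hune
    have hAx : ∀ x : X, A x = (f (A x)) • u := by
      intro x
      obtain ⟨r, hr'⟩ := hv₀ ⟨A x, ⟨x, rfl⟩⟩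
      have h1 : r • u = A x := by
        have := congrArg (fun z : ↥(LinearMap.range (A : X →ₗ[ℂ] X)) => (z : X)) hr'
        simpa using this
      have h2 : f (A x) = r := by
        rw [← h1, map_smul, smul_eq_mul, hf, mul_one]
      rw [h2, h1]
    constructor
    · set c := f (A (T u)) with hc
      have hstep : A (T u) = c • u := by rw [hc]; exact hAx (T u)
      have hEq : A * T * A = (f.comp A).smulRight (c • u) := by
        ext x
        have h0 : (A * T * A) x = A (T (A x)) := rfl
        rw [h0, hAx x, map_smul, map_smul, hstep]
        simp [ContinuousLinearMap.smulRight_apply, ContinuousLinearMap.comp_apply]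
      rw [hEq]
      exact ascent_smulRight_mem hnt hkerfun _ _
    · have hEq : T * A * T = ((f.comp A).comp T).smulRight (T u) := by
        ext x
        have h0 : (T * A * T) x = T (A (T x)) := rfl
        rw [h0, hAx (T x), map_smul]
        simp [ContinuousLinearMap.smulRight_apply, ContinuousLinearMap.comp_apply]
      rw [hEq]
      exact ascent_smulRight_mem hnt hkerfun _ _
  · -- the ascent conditions imply rank one
    intro hyp
    by_contra hr1
    have hU0 : ∃ x : X, A x ≠ 0 := by
      by_contra hcon
      push_neg at hcon
      exact hA (by ext x; simp [hcon x])
    obtain ⟨x0, hx0⟩ := hU0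
    have hascA : ascent A ∈ ({1, 2} : Set ℕ∞) := by
      have h1 := (hyp 1).2
      rwa [one_mul, mul_one] at h1
    obtain ⟨w, hwker, hw0⟩ := (Submodule.ne_bot_iff _).mp (ker_ne_bot_of_ascent_mem hascA)
    have hwA : A w = 0 := LinearMap.mem_ker.mp hwker
    have hv1U : A x0 ∈ LinearMap.range (A : X →ₗ[ℂ] X) := ⟨x0, rfl⟩
    obtain ⟨v2, hv2U, hv2⟩ := exists_notin_span hr1 hv1U hx0
    set v1 := A x0 with hv1def
    have hv1ne : v1 ≠ 0 := hx0
    have hv2ne : v2 ≠ 0 := fun h => hv2 (by rw [h]; exact Submodule.zero_mem _)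
    by_cases hCinj : ∀ c ∈ LinearMap.range (A : X →ₗ[ℂ] X), A c = 0 → c = 0
    · -- A is injective on its range
      have hwU : w ∉ LinearMap.range (A : X →ₗ[ℂ] X) := fun h => hw0 (hCinj w h hwA)
      by_cases h2a : ∃ x ∈ LinearMap.range (A : X →ₗ[ℂ] X),
          LinearIndependent ℂ ![x, A x] ∧ A (A x) ∉ span ℂ ({x, A x} : Set X)
      · obtain ⟨x, hxU, hxpair, hxA2⟩ := h2a
        have htriple : LinearIndependent ℂ ![A (A x), x, A x] := by
          have h' : LinearIndependent ℂ (Fin.cons (A (A x)) ![x, A x]) := by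
            rw [linearIndependent_fin_cons]
            refine ⟨hxpair, fun hmem => hxA2 ?_⟩
            have hr : Set.range ![x, A x] = ({x, A x} : Set X) := by
              ext y
              simp only [Matrix.range_cons, Matrix.range_empty, Set.union_empty,
                Set.mem_union, Set.mem_singleton_iff, Set.mem_insert_iff]
            rwa [hr] at hmem
          exact h'
        have hquad : LinearIndependent ℂ ![w, A (A x), x, A x] := by
          have h' : LinearIndependent ℂ (Fin.cons w ![A (A x), x, A x]) := by
            rw [linearIndependent_fin_cons]
            refine ⟨htriple, fun hmem => hwU ?_⟩
            have hsub : span ℂ (Set.range ![A (A x), x, A x]) ≤ LinearMap.range (A : X →ₗ[ℂ] X) := by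
              rw [Submodule.span_le]
              intro y hy
              simp only [Matrix.range_cons, Matrix.range_empty, Set.union_empty,
                Set.mem_union, Set.mem_singleton_iff] at hy
              rcases hy with rfl | rfl | rfl
              · exact ⟨A x, rfl⟩
              · exact hxU
              · exact ⟨x, rfl⟩
            exact hsub hmem
          exact h'
        obtain ⟨T, hT⟩ := exists_clm_of_values hquad ![w, w, x, A x]
        have hTw : T w = w := by simpa using hT 0
        have hTA2 : T (A (A x)) = w := by simpa using hT 1
        have hTx : T x = x := by simpa using hT 2
        have hTAx : T (A x) = A x := by simpa using hT 3
        have hs1 : (T * A * T) x = A x := by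
          show T (A (T x)) = A x
          rw [hTx, hTAx]
        have hs2 : (T * A * T) (A x) = w := by
          show T (A (T (A x))) = w
          rw [hTAx, hTA2]
        have hs3 : (T * A * T) w = 0 := by
          show T (A (T w)) = 0
          rw [hTw, hwA, map_zero]
        exact contra_of_chain (hyp T).2
          (by rw [pow_two_apply, hs1, hs2]) hw0
          (by rw [pow_three_apply, hs1, hs2, hs3])
      · push_neg at h2a
        have heig : ∃ (e1 : X) (μ : ℂ), e1 ∈ LinearMap.range (A : X →ₗ[ℂ] X) ∧ e1 ≠ 0 ∧ μ ≠ 0 ∧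
            A e1 = μ • e1 := by
          by_cases hAv1 : A v1 ∈ span ℂ ({v1} : Set X)
          · obtain ⟨μ, hμ⟩ := Submodule.mem_span_singleton.mp hAv1
            refine ⟨v1, μ, hv1U, hv1ne, ?_, hμ.symm⟩
            intro h0
            exact hv1ne (hCinj v1 hv1U (by rw [← hμ, h0, zero_smul]))
          · have hpair : LinearIndependent ℂ ![v1, A v1] := pair_indep hv1ne hAv1
            have hA2 : A (A v1) ∈ span ℂ ({v1, A v1} : Set X) := by
              by_contra hA2n
              exact hA2n (h2a v1 hv1U hpair)
            have hv1W : v1 ∈ span ℂ ({v1, A v1} : Set X) := subset_span (by simp)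
            have hAv1W : A v1 ∈ span ℂ ({v1, A v1} : Set X) := subset_span (by simp)
            have hWU : span ℂ ({v1, A v1} : Set X) ≤ LinearMap.range (A : X →ₗ[ℂ] X) := by
              rw [Submodule.span_le]
              intro y hy
              simp only [Set.mem_insert_iff, Set.mem_singleton_iff] at hy
              rcases hy with rfl | rfl
              · exact hv1U
              · exact ⟨v1, rfl⟩
            have hWinv : ∀ y ∈ span ℂ ({v1, A v1} : Set X),
                (A : X →ₗ[ℂ] X) y ∈ span ℂ ({v1, A v1} : Set X) := by
              intro y hy
              obtain ⟨cc, dd, hcd⟩ := Submodule.mem_span_pair.mp hy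
              have : (A : X →ₗ[ℂ] X) y = cc • A v1 + dd • A (A v1) := by
                rw [← hcd]
                simp [map_add, map_smul]
              rw [this]
              exact add_mem (Submodule.smul_mem _ _ hAv1W) (Submodule.smul_mem _ _ hA2)
            haveI hWfd : FiniteDimensional ℂ ↥(span ℂ ({v1, A v1} : Set X)) :=
              FiniteDimensional.span_of_finite ℂ ((Set.finite_singleton (A v1)).insert v1)
            haveI hWnt : Nontrivial ↥(span ℂ ({v1, A v1} : Set X)) :=
              ⟨⟨⟨v1, hv1W⟩, 0, by simp [Subtype.ext_iff, hv1ne]⟩⟩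
            obtain ⟨μ, hμ⟩ := Module.End.exists_eigenvalue
              ((A : X →ₗ[ℂ] X).restrict hWinv)
            obtain ⟨y, hy⟩ := hμ.exists_hasEigenvector
            have hyne : (y : X) ≠ 0 := fun h => hy.2 (Subtype.ext h)
            have hAy : A (y : X) = μ • (y : X) := by
              have h1 := hy.apply_eq_smul
              have h2 := congrArg (fun z : ↥(span ℂ ({v1, A v1} : Set X)) => (z : X)) h1
              simpa [LinearMap.restrict_apply] using h2
            refine ⟨(y : X), μ, hWU y.2, hyne, ?_, hAy⟩
            intro h0
            exact hyne (hCinj _ (hWU y.2) (by rw [hAy, h0, zero_smul]))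
        obtain ⟨e1, μ, he1U, he1ne, hμne, hAe1⟩ := heig
        have hp : ∃ p, p ∈ LinearMap.range (A : X →ₗ[ℂ] X) ∧ A p ∉ span ℂ ({e1} : Set X) := by
          by_contra hcon
          push_neg at hcon
          have key : ∀ y ∈ LinearMap.range (A : X →ₗ[ℂ] X), y ∈ span ℂ ({e1} : Set X) := by
            intro y hyU
            obtain ⟨cy, hcy⟩ := Submodule.mem_span_singleton.mp (hcon y hyU)
            have hq : A (μ • y - cy • e1) = 0 := by
              rw [map_sub, map_smul, map_smul, ← hcy, hAe1, smul_smul, smul_smul,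
                mul_comm, sub_self]
            have hqU : μ • y - cy • e1 ∈ LinearMap.range (A : X →ₗ[ℂ] X) :=
              sub_mem (Submodule.smul_mem _ _ hyU) (Submodule.smul_mem _ _ he1U)
            have h0 := hCinj _ hqU hq
            have hy' : μ • y = cy • e1 := by rwa [sub_eq_zero] at h0
            rw [Submodule.mem_span_singleton]
            refine ⟨μ⁻¹ * cy, ?_⟩
            rw [mul_smul, ← hy', smul_smul, inv_mul_cancel₀ hμne, one_smul]
          obtain ⟨c1, hc1⟩ := Submodule.mem_span_singleton.mp (key v1 hv1U)
          obtain ⟨c2, hc2⟩ := Submodule.mem_span_singleton.mp (key v2 hv2U)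
          have hc1ne : c1 ≠ 0 := fun h => hv1ne (by rw [← hc1, h, zero_smul])
          apply hv2
          rw [Submodule.mem_span_singleton]
          refine ⟨c2 / c1, ?_⟩
          rw [← hc1, smul_smul, div_mul_cancel₀ _ hc1ne, hc2]
        obtain ⟨p, hpU, hpA⟩ := hp
        have he2U : A p ∈ LinearMap.range (A : X →ₗ[ℂ] X) := ⟨p, rfl⟩
        have hpair2 : LinearIndependent ℂ ![e1, A p] := pair_indep he1ne hpA
        have htrip : LinearIndependent ℂ ![w, e1, A p] := by
          have h' : LinearIndependent ℂ (Fin.cons w ![e1, A p]) := by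
            rw [linearIndependent_fin_cons]
            refine ⟨hpair2, fun hmem => hwU ?_⟩
            have hsub : span ℂ (Set.range ![e1, A p]) ≤ LinearMap.range (A : X →ₗ[ℂ] X) := by
              rw [Submodule.span_le]
              intro z hz
              simp only [Matrix.range_cons, Matrix.range_empty, Set.union_empty,
                Set.mem_union, Set.mem_singleton_iff] at hz
              rcases hz with rfl | rfl
              · exact he1U
              · exact he2U
            exact hsub hmem
          exact h'
        obtain ⟨T, hT⟩ := exists_clm_of_values htrip ![p, w, e1]
        have hTw : T w = p := by simpa using hT 0
        have hTe1 : T e1 = w := by simpa using hT 1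
        have hTe2 : T (A p) = e1 := by simpa using hT 2
        have hs1 : (T * A * T) (A p) = μ • w := by
          show T (A (T (A p))) = μ • w
          rw [hTe2, hAe1, map_smul, hTe1]
        have hsw : (T * A * T) w = e1 := by
          show T (A (T w)) = e1
          rw [hTw, hTe2]
        have hse1 : (T * A * T) e1 = 0 := by
          show T (A (T e1)) = 0
          rw [hTe1, hwA, map_zero]
        exact contra_of_chain (hyp T).2
          (by rw [pow_two_apply, hs1, map_smul, hsw])
          (smul_ne_zero hμne he1ne)
          (by rw [pow_three_apply, hs1, map_smul, hsw, map_smul, hse1, smul_zero])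
    · push_neg at hCinj
      obtain ⟨c, hcU, hcA, hcne⟩ := hCinj
      by_cases hC0 : ∀ b ∈ LinearMap.range (A : X →ₗ[ℂ] X), A b = 0
      · -- A vanishes on its range
        have hAv1 : A v1 = 0 := hC0 v1 hv1U
        have hAv2 : A v2 = 0 := hC0 v2 hv2U
        obtain ⟨s1, hs1A⟩ := LinearMap.mem_range.mp hv1U
        obtain ⟨s2, hs2A⟩ := LinearMap.mem_range.mp hv2U
        simp only [ContinuousLinearMap.coe_coe] at hs1A hs2A
        have hpairv : LinearIndependent ℂ ![v1, v2] := pair_indep hv1ne hv2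
        have hquad : LinearIndependent ℂ ![s1, v1, s2, v2] := by
          rw [Fintype.linearIndependent_iff]
          intro gg hgg
          rw [Fin.sum_univ_four] at hgg
          simp only [Matrix.cons_val_zero, Matrix.cons_val_one, Matrix.head_cons,
            Matrix.cons_val_two, Matrix.tail_cons, Matrix.cons_val_three] at hgg
          have hgg2 : A (gg 0 • s1 + gg 1 • v1 + gg 2 • s2 + gg 3 • v2) = 0 := by
            rw [hgg, map_zero]
          simp only [map_add, map_smul, hs1A, hs2A, hAv1, hAv2, smul_zero,
            add_zero, zero_add] at hgg2
          obtain ⟨h02, h22⟩ := pair_comb hpairv hgg2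
          rw [h02, h22, zero_smul, zero_smul, zero_add, add_zero] at hgg
          obtain ⟨h12, h32⟩ := pair_comb hpairv hgg
          intro i
          fin_cases i
          · exact h02
          · exact h12
          · exact h22
          · exact h32
        obtain ⟨T, hT⟩ := exists_clm_of_values hquad ![s1, s2, s2, v2]
        have hTs1 : T s1 = s1 := by simpa using hT 0
        have hTv1 : T v1 = s2 := by simpa using hT 1
        have hTs2 : T s2 = s2 := by simpa using hT 2
        have hTv2 : T v2 = v2 := by simpa using hT 3
        have hsa : (T * A * T) s1 = s2 := by
          show T (A (T s1)) = s2
          rw [hTs1, hs1A, hTv1]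
        have hsb : (T * A * T) s2 = v2 := by
          show T (A (T s2)) = v2
          rw [hTs2, hs2A, hTv2]
        have hsc : (T * A * T) v2 = 0 := by
          show T (A (T v2)) = 0
          rw [hTv2, hAv2, map_zero]
        exact contra_of_chain (hyp T).2
          (by rw [pow_two_apply, hsa, hsb]) hv2ne
          (by rw [pow_three_apply, hsa, hsb, hsc])
      · push_neg at hC0
        obtain ⟨b, hbU, hbA⟩ := hC0
        have hAbU : A b ∈ LinearMap.range (A : X →ₗ[ℂ] X) := ⟨b, rfl⟩
        obtain ⟨a, haU, haspan⟩ := exists_notin_span hr1 hAbU hbA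
        have hpairA : LinearIndependent ℂ ![A b, a] := pair_indep hbA haspan
        obtain ⟨ta, htaA⟩ := hbU
        obtain ⟨tb, htbA⟩ := hcU
        obtain ⟨z, hzA⟩ := haU
        simp only [ContinuousLinearMap.coe_coe] at htaA htbA hzA
        obtain ⟨T, hT⟩ := exists_clm_of_values hpairA ![tb, ta]
        have hTAb : T (A b) = tb := by simpa using hT 0
        have hTa : T a = ta := by simpa using hT 1
        have hna : (A * T * A) z = b := by
          show A (T (A z)) = b
          rw [hzA, hTa, htaA]
        have hnb : (A * T * A) b = c := by
          show A (T (A b)) = c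
          rw [hTAb, htbA]
        have hnc : (A * T * A) c = 0 := by
          show A (T (A c)) = 0
          rw [hcA, map_zero, map_zero]
        exact contra_of_chain (hyp T).1
          (by rw [pow_two_apply, hna, hnb]) hcne
          (by rw [pow_three_apply, hna, hnb, hnc])
end

section
/- Let X be a complex Banach space with dim X ≥ 3 and let A ∈ B(X) be a rank-one operator. Then the following are equivalent: (1) A is a scalar multiple of a rank-one idempotent, i.e., there exist c ∈ ℂ and P ∈ B(X) with P² = P, rank P = 1, and A = cP; (2) α(ATA) = 1 for every T ∈ B(X); (3) δ(ATA) = 1 for every T ∈ B(X). -/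
lemma aux_sInf_one {s : Set ℕ} (h1 : 1 ∈ s) (h0 : 0 ∉ s) :
    sInf ((Nat.cast : ℕ → ℕ∞) '' s) = 1 := by
  apply le_antisymm
  · exact sInf_le ⟨1, h1, rfl⟩
  · apply le_sInf
    rintro _ ⟨m, hm, rfl⟩
    exact_mod_cast Nat.one_le_iff_ne_zero.2 (fun h => h0 (h ▸ hm))

lemma aux_sInf_ne_one {s : Set ℕ} (h1 : 1 ∉ s) (h0 : 0 ∉ s) :
    sInf ((Nat.cast : ℕ → ℕ∞) '' s) ≠ 1 := by
  intro h
  have h2 : (2 : ℕ∞) ≤ sInf ((Nat.cast : ℕ → ℕ∞) '' s) := by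
    apply le_sInf
    rintro _ ⟨m, hm, rfl⟩
    have : 2 ≤ m := by
      rcases m with _ | m
      · exact absurd hm h0
      · rcases m with _ | m
        · exact absurd hm h1
        · omega
    exact_mod_cast this
  rw [h] at h2
  exact absurd h2 (by norm_num)

theorem scalar_mul_rank_one_idempotent_iff {X : Type*} [NormedAddCommGroup X]
    [NormedSpace ℂ X] [CompleteSpace X] (hdim : 3 ≤ Module.rank ℂ X)
    (A : X →L[ℂ] X) (hA : Module.rank ℂ (LinearMap.range (A : X →ₗ[ℂ] X)) = 1) :
    ((∃ (c : ℂ) (P : X →L[ℂ] X), P * P = P ∧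
        Module.rank ℂ (LinearMap.range (P : X →ₗ[ℂ] X)) = 1 ∧ A = c • P) ↔
      (∀ T : X →L[ℂ] X, ascent (A * T * A) = 1)) ∧
    ((∃ (c : ℂ) (P : X →L[ℂ] X), P * P = P ∧
        Module.rank ℂ (LinearMap.range (P : X →ₗ[ℂ] X)) = 1 ∧ A = c • P) ↔
      (∀ T : X →L[ℂ] X, descent (A * T * A) = 1)) := by
  classical
  -- A is nonzero
  have hA0 : A ≠ 0 := by
    rintro rfl
    have hbot : LinearMap.range ((0 : X →L[ℂ] X) : X →ₗ[ℂ] X) = ⊥ := by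
      ext x; simp [eq_comm]
    rw [hbot, rank_bot] at hA
    exact zero_ne_one hA
  -- get a spanning vector u of the range
  obtain ⟨u, humem, hu0, hle⟩ := (rank_submodule_eq_one_iff (LinearMap.range ((A : X →L[ℂ] X) : X →ₗ[ℂ] X))).1 hA
  have : Nontrivial X := ⟨⟨u, 0, hu0⟩⟩
  have hx : ∀ x : X, ∃ s : ℂ, A x = s • u := by
    intro x
    have hm : A x ∈ Submodule.span ℂ {u} := hle ⟨x, rfl⟩
    obtain ⟨s, hs⟩ := Submodule.mem_span_singleton.1 hm
    exact ⟨s, hs.symm⟩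
  obtain ⟨a, ha⟩ := hx u
  -- key operator identity : A T A = b • A  where  A (T u) = b • u
  have key : ∀ (T : X →L[ℂ] X) (b : ℂ), A (T u) = b • u → A * T * A = b • A := by
    intro T b hb
    ext x
    obtain ⟨s, hs⟩ := hx x
    simp only [ContinuousLinearMap.mul_apply, ContinuousLinearMap.smul_apply]
    rw [hs, map_smul, map_smul, hb, smul_comm]
  have hAA : A * A = a • A := by
    have := key 1 a (by simpa using ha)
    simpa using this
  -- basic submodule facts
  have hker_ne_top : LinearMap.ker ((A : X →L[ℂ] X) : X →ₗ[ℂ] X) ≠ ⊤ := by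
    intro h
    apply hA0
    ext x
    have hx' : x ∈ LinearMap.ker ((A : X →L[ℂ] X) : X →ₗ[ℂ] X) := by rw [h]; trivial
    simpa using hx'
  have hker_ne_bot : LinearMap.ker ((A : X →L[ℂ] X) : X →ₗ[ℂ] X) ≠ ⊥ := by
    intro h
    have hinj : Function.Injective A := by
      intro x y hxy
      have hsub : x - y ∈ LinearMap.ker ((A : X →L[ℂ] X) : X →ₗ[ℂ] X) := by
        simp [LinearMap.mem_ker, map_sub, hxy]
      rw [h] at hsub
      simpa [sub_eq_zero] using hsub
    have hre : LinearMap.range (A : X →ₗ[ℂ] X) = LinearMap.range ((A : X →L[ℂ] X) : X →ₗ[ℂ] X) := by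
      ext y; simp [LinearMap.mem_range]
    have h1 : Module.rank ℂ (LinearMap.range (A : X →ₗ[ℂ] X)) = Module.rank ℂ X :=
      rank_range_of_injective (A : X →ₗ[ℂ] X) hinj
    rw [hre, hA] at h1
    rw [← h1] at hdim
    exact absurd hdim (by norm_num)
  have hrange_ne_top : LinearMap.range ((A : X →L[ℂ] X) : X →ₗ[ℂ] X) ≠ ⊤ := by
    intro h
    rw [h, rank_top] at hA
    rw [hA] at hdim
    exact absurd hdim (by norm_num)
  have hrange_ne_bot : LinearMap.range ((A : X →L[ℂ] X) : X →ₗ[ℂ] X) ≠ ⊥ := by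
    intro h
    rw [h] at humem
    exact hu0 (Submodule.mem_bot ℂ |>.1 humem)
  -- ker/range of scalar multiples
  have hker_smul : ∀ (c : ℂ), c ≠ 0 → LinearMap.ker ((c • A : X →L[ℂ] X) : X →ₗ[ℂ] X) = LinearMap.ker ((A : X →L[ℂ] X) : X →ₗ[ℂ] X) := by
    intro c hc
    ext x
    simp [LinearMap.mem_ker, smul_eq_zero, hc]
  have hrange_smul : ∀ (c : ℂ), c ≠ 0 → LinearMap.range ((c • A : X →L[ℂ] X) : X →ₗ[ℂ] X) = LinearMap.range ((A : X →L[ℂ] X) : X →ₗ[ℂ] X) := by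
    intro c hc
    ext y
    constructor
    · rintro ⟨x, rfl⟩
      exact ⟨c • x, by simp⟩
    · rintro ⟨x, rfl⟩
      refine ⟨c⁻¹ • x, ?_⟩
      simp [smul_smul, inv_mul_cancel₀ hc]
  have hker_one : LinearMap.ker ((1 : X →L[ℂ] X) : X →ₗ[ℂ] X) = ⊥ := by
    ext x; simp [LinearMap.mem_ker]
  have hrange_one : LinearMap.range ((1 : X →L[ℂ] X) : X →ₗ[ℂ] X) = ⊤ := by
    ext y; simpa using ⟨y, rfl⟩
  have hker_zero : LinearMap.ker ((0 : X →L[ℂ] X) : X →ₗ[ℂ] X) = ⊤ := by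
    ext x; simp
  have hrange_zero : LinearMap.range ((0 : X →L[ℂ] X) : X →ₗ[ℂ] X) = ⊥ := by
    ext x; simp [eq_comm]
  have hpow2 : ∀ b : ℂ, (b • A) ^ 2 = (b * b * a) • A := by
    intro b
    rw [sq, smul_mul_smul_comm, hAA, smul_smul]
  -- the main characterisation : (1) ↔ a ≠ 0
  have hMain : (∃ (c : ℂ) (P : X →L[ℂ] X), P * P = P ∧
      Module.rank ℂ (LinearMap.range ((P : X →L[ℂ] X) : X →ₗ[ℂ] X)) = 1 ∧ A = c • P) ↔ a ≠ 0 := by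
    constructor
    · rintro ⟨c, P, hP, hPr, hAcP⟩
      have hc : c ≠ 0 := by
        rintro rfl
        rw [zero_smul] at hAcP
        exact hA0 hAcP
      have h1 : (c * c) • P = (a * c) • P := by
        have h2 : (c • P) * (c • P) = a • (c • P) := by rw [← hAcP]; exact hAA
        rw [smul_mul_smul_comm, hP, smul_smul] at h2
        exact h2
      intro ha0
      rw [ha0, zero_mul, zero_smul] at h1
      have hcc : c * c ≠ 0 := mul_ne_zero hc hc
      have hP0 : P = 0 := by
        calc P = (c * c)⁻¹ • ((c * c) • P) := by
                rw [smul_smul, inv_mul_cancel₀ hcc, one_smul]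
        _ = 0 := by rw [h1, smul_zero]
      rw [hP0, hrange_zero, rank_bot] at hPr
      exact zero_ne_one hPr
    · intro ha0
      refine ⟨a, a⁻¹ • A, ?_, ?_, ?_⟩
      · rw [smul_mul_smul_comm, hAA, smul_smul]
        congr 1
        field_simp
      · rw [hrange_smul a⁻¹ (inv_ne_zero ha0)]; exact hA
      · rw [smul_smul, mul_inv_cancel₀ ha0, one_smul]
  -- a nontrivial test operator : T with A T A = b • A, b ≠ 0
  have hTex : ∃ (T : X →L[ℂ] X) (b : ℂ), b ≠ 0 ∧ A * T * A = b • A := by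
    have hw : ∃ w, A w ≠ 0 := by
      by_contra h'
      push_neg at h'
      exact hA0 (by ext x; simpa using h' x)
    obtain ⟨w, hw⟩ := hw
    obtain ⟨g, hg1, hgu⟩ := exists_dual_vector ℂ u (norm_ne_zero_iff.2 hu0)
    set T : X →L[ℂ] X := g.smulRight (((‖u‖ : ℂ))⁻¹ • w) with hT
    have hnu : (‖u‖ : ℂ) ≠ 0 := by
      exact_mod_cast norm_ne_zero_iff.2 hu0
    have hgu' : g u = (‖u‖ : ℂ) := hgu
    have hTu : T u = w := by
      rw [hT, ContinuousLinearMap.smulRight_apply, hgu', smul_smul,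
        mul_inv_cancel₀ hnu, one_smul]
    obtain ⟨b, hb⟩ := hx (T u)
    have hb0 : b ≠ 0 := by
      rintro rfl
      rw [zero_smul] at hb
      rw [hTu] at hb
      exact hw hb
    exact ⟨T, b, hb0, key T b hb⟩
  constructor
  · rw [hMain]
    constructor
    · intro ha0 T
      obtain ⟨b, hb⟩ := hx (T u)
      rw [show ascent (A * T * A) = ascent (b • A) from by rw [key T b hb]]
      unfold ascent
      by_cases hb0 : b = 0
      · subst hb0
        rw [zero_smul]
        apply aux_sInf_one
        · show LinearMap.ker (((0 : X →L[ℂ] X) ^ 1 : X →L[ℂ] X) : X →ₗ[ℂ] X) = LinearMap.ker (((0 : X →L[ℂ] X) ^ (1 + 1) : X →L[ℂ] X) : X →ₗ[ℂ] X)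
          norm_num
        · show ¬ (LinearMap.ker (((0 : X →L[ℂ] X) ^ 0 : X →L[ℂ] X) : X →ₗ[ℂ] X) = LinearMap.ker (((0 : X →L[ℂ] X) ^ (0 + 1) : X →L[ℂ] X) : X →ₗ[ℂ] X))
          rw [pow_zero, pow_one, hker_one, hker_zero]
          exact bot_ne_top
      · apply aux_sInf_one
        · show LinearMap.ker (((b • A) ^ 1 : X →L[ℂ] X) : X →ₗ[ℂ] X) = LinearMap.ker (((b • A) ^ (1 + 1) : X →L[ℂ] X) : X →ₗ[ℂ] X)
          rw [pow_one, show (1 + 1 : ℕ) = 2 from rfl, hpow2, hker_smul b hb0,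
            hker_smul _ (mul_ne_zero (mul_ne_zero hb0 hb0) ha0)]
        · show ¬ (LinearMap.ker (((b • A) ^ 0 : X →L[ℂ] X) : X →ₗ[ℂ] X) = LinearMap.ker (((b • A) ^ (0 + 1) : X →L[ℂ] X) : X →ₗ[ℂ] X))
          rw [pow_zero, pow_one, hker_one, hker_smul b hb0]
          exact fun h => hker_ne_bot h.symm
    · intro hall
      by_contra ha0
      obtain ⟨T, b, hb0, hATA⟩ := hTex
      have h1 := hall T
      rw [show ascent (A * T * A) = ascent (b • A) from by rw [hATA]] at h1
      unfold ascent at h1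
      refine aux_sInf_ne_one ?_ ?_ h1
      · show ¬ (LinearMap.ker (((b • A) ^ 1 : X →L[ℂ] X) : X →ₗ[ℂ] X) = LinearMap.ker (((b • A) ^ (1 + 1) : X →L[ℂ] X) : X →ₗ[ℂ] X))
        rw [pow_one, show (1 + 1 : ℕ) = 2 from rfl, hpow2, ha0, mul_zero, zero_smul,
          hker_smul b hb0, hker_zero]
        exact hker_ne_top
      · show ¬ (LinearMap.ker (((b • A) ^ 0 : X →L[ℂ] X) : X →ₗ[ℂ] X) = LinearMap.ker (((b • A) ^ (0 + 1) : X →L[ℂ] X) : X →ₗ[ℂ] X))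
        rw [pow_zero, pow_one, hker_one, hker_smul b hb0]
        exact fun h => hker_ne_bot h.symm
  · rw [hMain]
    constructor
    · intro ha0 T
      obtain ⟨b, hb⟩ := hx (T u)
      rw [show descent (A * T * A) = descent (b • A) from by rw [key T b hb]]
      unfold descent
      by_cases hb0 : b = 0
      · subst hb0
        rw [zero_smul]
        apply aux_sInf_one
        · show LinearMap.range (((0 : X →L[ℂ] X) ^ 1 : X →L[ℂ] X) : X →ₗ[ℂ] X) = LinearMap.range (((0 : X →L[ℂ] X) ^ (1 + 1) : X →L[ℂ] X) : X →ₗ[ℂ] X)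
          norm_num
        · show ¬ (LinearMap.range (((0 : X →L[ℂ] X) ^ 0 : X →L[ℂ] X) : X →ₗ[ℂ] X) = LinearMap.range (((0 : X →L[ℂ] X) ^ (0 + 1) : X →L[ℂ] X) : X →ₗ[ℂ] X))
          rw [pow_zero, pow_one, hrange_one, hrange_zero]
          exact top_ne_bot
      · apply aux_sInf_one
        · show LinearMap.range (((b • A) ^ 1 : X →L[ℂ] X) : X →ₗ[ℂ] X) = LinearMap.range (((b • A) ^ (1 + 1) : X →L[ℂ] X) : X →ₗ[ℂ] X)
          rw [pow_one, show (1 + 1 : ℕ) = 2 from rfl, hpow2, hrange_smul b hb0,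
            hrange_smul _ (mul_ne_zero (mul_ne_zero hb0 hb0) ha0)]
        · show ¬ (LinearMap.range (((b • A) ^ 0 : X →L[ℂ] X) : X →ₗ[ℂ] X) = LinearMap.range (((b • A) ^ (0 + 1) : X →L[ℂ] X) : X →ₗ[ℂ] X))
          rw [pow_zero, pow_one, hrange_one, hrange_smul b hb0]
          exact fun h => hrange_ne_top h.symm
    · intro hall
      by_contra ha0
      obtain ⟨T, b, hb0, hATA⟩ := hTex
      have h1 := hall T
      rw [show descent (A * T * A) = descent (b • A) from by rw [hATA]] at h1
      unfold descent at h1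
      refine aux_sInf_ne_one ?_ ?_ h1
      · show ¬ (LinearMap.range (((b • A) ^ 1 : X →L[ℂ] X) : X →ₗ[ℂ] X) = LinearMap.range (((b • A) ^ (1 + 1) : X →L[ℂ] X) : X →ₗ[ℂ] X))
        rw [pow_one, show (1 + 1 : ℕ) = 2 from rfl, hpow2, ha0, mul_zero, zero_smul,
          hrange_smul b hb0, hrange_zero]
        exact hrange_ne_bot
      · show ¬ (LinearMap.range (((b • A) ^ 0 : X →L[ℂ] X) : X →ₗ[ℂ] X) = LinearMap.range (((b • A) ^ (0 + 1) : X →L[ℂ] X) : X →ₗ[ℂ] X))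
        rw [pow_zero, pow_one, hrange_one, hrange_smul b hb0]
        exact fun h => hrange_ne_top h.symm
end
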